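/- arXiv:2007.11524 — 2 statements merged into one kernel-verified Lean document; each statement's English description precedes it below -/
import Mathlib

section
/- For integer α ≥ 2, a positive probability density z on ℝ, q ∈ [0,1], and a mean vector ψ = (ψ₁,…,ψ_n) ∈ ℝⁿ, letting P = product density ∏ᵢ z(xᵢ − ψᵢ) and Q = ∏ᵢ z(xᵢ), the Rényi divergence satisfies D_α((1−q)Q + qP ‖ Q) = (1/(α−1)) · log Σ_{k=0}^{α} C(α,k) q^k (1−q)^{α−k} ∏ᵢ ∫ (z(x−ψᵢ)/z(x))^k z(x) dx, assuming all moment integrals are finite. -/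
open MeasureTheory Real
noncomputable section

/-- The order-α (integer α ≥ 2) Rényi divergence between the subsampled product
mechanism (1−q)Q + qP, with P = ∏ᵢ z(xᵢ−ψᵢ) and Q = ∏ᵢ z(xᵢ), and the baseline Q
equals (1/(α−1)) log of a binomial sum of products of one-dimensional
likelihood-ratio moments. -/
theorem renyi_product_mixture (n : ℕ) (α : ℕ) (hα : 2 ≤ α) (z : ℝ → ℝ)
    (hz : ∀ x, 0 < z x) (hzd : ∫ x, z x = 1)
    (q : ℝ) (hq : q ∈ Set.Icc (0:ℝ) 1) (ψ : Fin n → ℝ)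
    (hint : ∀ i : Fin n, ∀ k : ℕ, k ≤ α →
      Integrable (fun x => (z (x - ψ i) / z x) ^ k * z x)) :
    (1/((α:ℝ)-1)) * Real.log (∫ x : Fin n → ℝ,
        (((1-q) * ∏ i, z (x i) + q * ∏ i, z (x i - ψ i)) / ∏ i, z (x i)) ^ (α:ℝ)
          * ∏ i, z (x i))
    = (1/((α:ℝ)-1)) * Real.log (∑ k ∈ Finset.range (α+1),
        (α.choose k : ℝ) * q^k * (1-q)^(α-k) *
          ∏ i, ∫ x, (z (x - ψ i) / z x) ^ k * z x) := by
  congr 1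
  congr 1
  -- pointwise rewrite of the integrand
  have hpt : ∀ x : Fin n → ℝ,
      (((1-q) * ∏ i, z (x i) + q * ∏ i, z (x i - ψ i)) / ∏ i, z (x i)) ^ (α:ℝ)
          * ∏ i, z (x i)
      = ∑ k ∈ Finset.range (α+1),
          ((α.choose k : ℝ) * q^k * (1-q)^(α-k)) *
            ∏ i, ((z (x i - ψ i) / z (x i)) ^ k * z (x i)) := by
    intro x
    set A : ℝ := ∏ i, z (x i) with hA
    set B : ℝ := ∏ i, z (x i - ψ i) with hB
    have hApos : 0 < A := Finset.prod_pos fun i _ => hz _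
    have hBpos : 0 < B := Finset.prod_pos fun i _ => hz _
    have hbase : 0 ≤ ((1-q) * A + q * B) / A := by
      apply div_nonneg _ hApos.le
      have h1 : 0 ≤ 1 - q := by linarith [hq.2]
      nlinarith [hq.1, hApos.le, hBpos.le]
    rw [show (((1-q) * A + q * B) / A) ^ (α:ℝ)
        = (((1-q) * A + q * B) / A) ^ α by
      rw [← Real.rpow_natCast (((1-q) * A + q * B) / A) α]]
    have hdiv : ((1-q) * A + q * B) / A = q * (B / A) + (1-q) := by
      field_simp
      ring
    rw [hdiv, add_pow]
    rw [Finset.sum_mul]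
    refine Finset.sum_congr rfl fun k hk => ?_
    have hBA : (B / A) ^ k * A = ∏ i, ((z (x i - ψ i) / z (x i)) ^ k * z (x i)) := by
      rw [Finset.prod_mul_distrib, Finset.prod_pow, Finset.prod_div_distrib, ← hA, ← hB]
    rw [← hBA]
    ring
  have h1 : (∫ x : Fin n → ℝ,
      (((1-q) * ∏ i, z (x i) + q * ∏ i, z (x i - ψ i)) / ∏ i, z (x i)) ^ (α:ℝ)
        * ∏ i, z (x i))
    = ∫ x : Fin n → ℝ, ∑ k ∈ Finset.range (α+1),
        ((α.choose k : ℝ) * q^k * (1-q)^(α-k)) *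
          ∏ i, ((z (x i - ψ i) / z (x i)) ^ k * z (x i)) := by
    congr 1
    funext x
    exact hpt x
  rw [h1, integral_finset_sum]
  · refine Finset.sum_congr rfl fun k hk => ?_
    rw [integral_const_mul, MeasureTheory.integral_fintype_prod_volume_eq_prod (ι := Fin n)
      (fun i t => (z (t - ψ i) / z t) ^ k * z t)]
  · intro k hk
    exact (Integrable.fintype_prod (fun i =>
      hint i k (Nat.lt_succ_iff.mp (Finset.mem_range.mp hk)))).const_mul _
end
end

section
/- For the Gaussian noise density with variance σ², the closed-form RDP of the subsampled shifted mechanism with unit-norm shift vector ψ (‖ψ‖₂ = 1) and sampling rate q at integer order α satisfies ε(α; q, ψ) ≤ (1/(α−1)) log Σ_{k=0}^α C(α,k) q^k (1−q)^{α−k} exp(k(k−1)/(2σ²)), with equality when all the shift mass is in one coordinate. -/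
open MeasureTheory Real
open scoped BigOperators
noncomputable section

/-- The Gaussian density with standard deviation σ and mean μ. -/
def gauss (σ μ x : ℝ) : ℝ :=
  Real.exp (-(x - μ)^2 / (2*σ^2)) / Real.sqrt (2*Real.pi*σ^2)

lemma gauss_pos {σ : ℝ} (hσ : 0 < σ) (μ x : ℝ) : 0 < gauss σ μ x := by
  unfold gauss
  exact div_pos (Real.exp_pos _) (Real.sqrt_pos.2 (by positivity))

lemma gauss_eq_pdf {σ : ℝ} (hσ : 0 < σ) (μ : ℝ) :
    gauss σ μ = ProbabilityTheory.gaussianPDFReal μ ⟨σ^2, sq_nonneg σ⟩ := by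
  funext x
  simp only [gauss, ProbabilityTheory.gaussianPDFReal, NNReal.coe_mk]
  rw [div_eq_inv_mul]
  rfl

lemma integrable_gauss {σ : ℝ} (hσ : 0 < σ) (μ : ℝ) : Integrable (gauss σ μ) := by
  rw [gauss_eq_pdf hσ]
  exact ProbabilityTheory.integrable_gaussianPDFReal _ _

lemma integral_gauss {σ : ℝ} (hσ : 0 < σ) (μ : ℝ) : ∫ x, gauss σ μ x = 1 := by
  rw [gauss_eq_pdf hσ]
  exact ProbabilityTheory.integral_gaussianPDFReal_eq_one μ (fun h => (pow_pos hσ 2).ne' (by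
    have h' := congrArg NNReal.toReal h
    exact h'))

/-- Tilting identity: the k-th power of the likelihood ratio times the baseline
Gaussian is a shifted Gaussian times a constant. -/
lemma tilt {σ : ℝ} (hσ : 0 < σ) (μ : ℝ) (k : ℕ) (t : ℝ) :
    (gauss σ μ t / gauss σ 0 t)^k * gauss σ 0 t
      = Real.exp ((k:ℝ) * ((k:ℝ)-1) * μ^2 / (2*σ^2)) * gauss σ ((k:ℝ)*μ) t := by
  have hC : Real.sqrt (2*Real.pi*σ^2) ≠ 0 := ne_of_gt (Real.sqrt_pos.2 (by positivity))
  have hσ2 : (σ:ℝ)^2 ≠ 0 := by positivity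
  unfold gauss
  have hdiv : ∀ a b : ℝ, (Real.exp a / Real.sqrt (2*Real.pi*σ^2))
      / (Real.exp b / Real.sqrt (2*Real.pi*σ^2)) = Real.exp (a - b) := by
    intro a b
    rw [Real.exp_sub]
    field_simp
  have h2 : ∀ a b : ℝ, Real.exp a * (Real.exp b / Real.sqrt (2*Real.pi*σ^2))
      = Real.exp (a+b) / Real.sqrt (2*Real.pi*σ^2) := by
    intro a b
    rw [Real.exp_add]
    ring
  rw [hdiv, ← Real.exp_nat_mul, h2, h2]
  congr 1
  · rw [Real.exp_eq_exp]
    field_simp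
    ring

lemma integral_tilt {σ : ℝ} (hσ : 0 < σ) (μ : ℝ) (k : ℕ) :
    ∫ t, (gauss σ μ t / gauss σ 0 t)^k * gauss σ 0 t
      = Real.exp ((k:ℝ) * ((k:ℝ)-1) * μ^2 / (2*σ^2)) := by
  simp_rw [tilt hσ μ k]
  rw [integral_const_mul, integral_gauss hσ, mul_one]

lemma integrable_tilt {σ : ℝ} (hσ : 0 < σ) (μ : ℝ) (k : ℕ) :
    Integrable (fun t => (gauss σ μ t / gauss σ 0 t)^k * gauss σ 0 t) := by
  simp_rw [tilt hσ μ k]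
  exact (integrable_gauss hσ _).const_mul _

/-- Closed-form RDP bound for the subsampled Gaussian mechanism with unit-norm
shift ψ: the order-α Rényi divergence of the mixture against the baseline is at
most (1/(α−1)) log Σ C(α,k) qᵏ(1−q)^{α−k} exp(k(k−1)/(2σ²)). -/
theorem subsampled_gaussian_bound (n : ℕ) (σ : ℝ) (hσ : 0 < σ)
    (ψ : Fin n → ℝ) (hψ : ∑ i, (ψ i)^2 = 1)
    (q : ℝ) (hq : q ∈ Set.Icc (0:ℝ) 1) (α : ℕ) (hα : 2 ≤ α) :
    (1/((α:ℝ)-1)) * Real.log (∫ x : Fin n → ℝ,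
      (((1-q) * ∏ i, gauss σ 0 (x i) + q * ∏ i, gauss σ (ψ i) (x i))
          / ∏ i, gauss σ 0 (x i)) ^ (α:ℝ) * ∏ i, gauss σ 0 (x i))
    ≤ (1/((α:ℝ)-1)) * Real.log (∑ k ∈ Finset.range (α+1),
        (α.choose k : ℝ) * q^k * (1-q)^(α-k) *
          Real.exp ((k:ℝ) * ((k:ℝ)-1) / (2*σ^2))) := by
  have key : (∫ x : Fin n → ℝ,
      (((1-q) * ∏ i, gauss σ 0 (x i) + q * ∏ i, gauss σ (ψ i) (x i))
          / ∏ i, gauss σ 0 (x i)) ^ (α:ℝ) * ∏ i, gauss σ 0 (x i))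
      = ∑ k ∈ Finset.range (α+1),
        (α.choose k : ℝ) * q^k * (1-q)^(α-k) *
          Real.exp ((k:ℝ) * ((k:ℝ)-1) / (2*σ^2)) := by
    have hpt : ∀ x : Fin n → ℝ,
        (((1-q) * ∏ i, gauss σ 0 (x i) + q * ∏ i, gauss σ (ψ i) (x i))
          / ∏ i, gauss σ 0 (x i)) ^ (α:ℝ) * ∏ i, gauss σ 0 (x i)
        = ∑ k ∈ Finset.range (α+1),
            (α.choose k : ℝ) * q^k * (1-q)^(α-k) *
              ∏ i, (gauss σ (ψ i) (x i) / gauss σ 0 (x i))^k * gauss σ 0 (x i) := by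
      intro x
      have hP0 : (0:ℝ) < ∏ i, gauss σ 0 (x i) :=
        Finset.prod_pos fun i _ => gauss_pos hσ 0 (x i)
      rw [Real.rpow_natCast]
      have hratio : ((1-q) * ∏ i, gauss σ 0 (x i) + q * ∏ i, gauss σ (ψ i) (x i))
            / ∏ i, gauss σ 0 (x i)
          = q * ((∏ i, gauss σ (ψ i) (x i)) / ∏ i, gauss σ 0 (x i)) + (1-q) := by
        field_simp
        ring
      rw [hratio, add_pow, Finset.sum_mul]
      refine Finset.sum_congr rfl fun k hk => ?_
      rw [mul_pow, ← Finset.prod_div_distrib, ← Finset.prod_pow, Finset.prod_mul_distrib]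
      ring
    simp_rw [hpt]
    rw [integral_finset_sum]
    · refine Finset.sum_congr rfl fun k hk => ?_
      rw [integral_const_mul, volume_pi,
        integral_fintype_prod_eq_prod (ι := Fin n)
          (f := fun i t => (gauss σ (ψ i) t / gauss σ 0 t)^k * gauss σ 0 t)]
      congr 1
      have : ∀ i : Fin n, (∫ t, (gauss σ (ψ i) t / gauss σ 0 t)^k * gauss σ 0 t)
          = Real.exp ((k:ℝ) * ((k:ℝ)-1) * (ψ i)^2 / (2*σ^2)) := fun i => integral_tilt hσ _ k
      simp_rw [this, ← Real.exp_sum]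
      congr 1
      rw [← Finset.sum_div, ← Finset.mul_sum, hψ, mul_one]
    · intro k hk
      exact (Integrable.fintype_prod (fun i => integrable_tilt hσ (ψ i) k)).const_mul _
  rw [key]
end
end
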